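/- Let A be a Prüfer domain, i.e., an integral domain in which every finitely generated ideal 𝔞 is locally principal (there exist f₁, …, f_n ∈ A with 1 = f₁ + ⋯ + f_n such that for each i the ideal generated by the image of 𝔞 in A[f_i⁻¹] is a principal ideal). Then every matrix M over A can locally be brought into diagonal form: there exist g₁, …, g_k ∈ A with 1 = g₁ + ⋯ + g_k such that for each i there are invertible matrices P, Q over A[g_i⁻¹] with all entries of P·M·Q off the main diagonal equal to zero (M regarded as a matrix over A[g_i⁻¹]). -/

import Mathlib

open Matrix

/-- A matrix has (two-sided equivalent) diagonal form over `R`. -/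
def DiagBLT {R : Type*} [CommRing R] {n m : ℕ} (M : Matrix (Fin n) (Fin m) R) : Prop :=
  ∃ (P : (Matrix (Fin n) (Fin n) R)ˣ) (Q : (Matrix (Fin m) (Fin m) R)ˣ),
    ∀ (r : Fin n) (c : Fin m), (r : ℕ) ≠ (c : ℕ) →
      ((P : Matrix (Fin n) (Fin n) R) * M * (Q : Matrix (Fin m) (Fin m) R)) r c = 0

/-- Locally diagonalizable: over a family of localizations with elements spanning the
unit ideal. -/
def LD (R : Type*) [CommRing R] {n m : ℕ} (M : Matrix (Fin n) (Fin m) R) : Prop :=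
  ∃ (k : ℕ) (g : Fin k → R), Ideal.span (Set.range g) = ⊤ ∧
    ∀ i, DiagBLT (M.map (algebraMap R (Localization.Away (g i))))

theorem DiagBLT.map {R S : Type*} [CommRing R] [CommRing S] {n m : ℕ}
    {M : Matrix (Fin n) (Fin m) R} (h : DiagBLT M) (φ : R →+* S) :
    DiagBLT (M.map φ) := by
  obtain ⟨P, Q, hPQ⟩ := h
  refine ⟨Units.map φ.mapMatrix.toMonoidHom P, Units.map φ.mapMatrix.toMonoidHom Q, ?_⟩
  intro r c hrc
  have : ((P : Matrix (Fin n) (Fin n) R) * M * (Q : Matrix (Fin m) (Fin m) R)).map φ r c = 0 := by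
    simp only [Matrix.map_apply, hPQ r c hrc, map_zero]
  rw [Matrix.map_mul, Matrix.map_mul] at this
  simpa [RingHom.mapMatrix_apply] using this

theorem diagBLT_map_comp {R S T : Type*} [CommRing R] [CommRing S] [CommRing T] {n m : ℕ}
    {M : Matrix (Fin n) (Fin m) R} {φ : R →+* S} {ψ : S →+* T} {χ : R →+* T}
    (h : DiagBLT (M.map φ)) (hcomp : ψ.comp φ = χ) : DiagBLT (M.map χ) := by
  have := h.map ψ
  rwa [Matrix.map_map, ← RingHom.coe_comp, hcomp] at this

theorem LD.of_diagBLT {R : Type*} [CommRing R] {n m : ℕ} {M : Matrix (Fin n) (Fin m) R}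
    (h : DiagBLT M) : LD R M := by
  refine ⟨1, fun _ => 1, ?_, fun i => h.map _⟩
  rw [Ideal.eq_top_iff_one]
  exact Ideal.subset_span ⟨0, rfl⟩
theorem isUnit_algebraMap_away_of_dvd {R : Type*} [CommRing R] {x y : R} (h : x ∣ y) :
    IsUnit (algebraMap R (Localization.Away y) x) := by
  obtain ⟨c, rfl⟩ := h
  have hy : IsUnit (algebraMap R (Localization.Away (x * c)) (x * c)) :=
    IsLocalization.map_units _ (⟨x * c, Submonoid.mem_powers _⟩ : Submonoid.powers (x * c))
  rw [_root_.map_mul] at hy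
  exact isUnit_of_mul_isUnit_left hy

theorem exists_hom_away_away {R : Type*} [CommRing R] (g a : R)
    (h : Localization.Away g) (s : Submonoid.powers g)
    (hs : h * algebraMap R (Localization.Away g) s = algebraMap R (Localization.Away g) a) :
    ∃ ψ : Localization.Away h →+* Localization.Away (g * a),
      ψ.comp ((algebraMap (Localization.Away g) (Localization.Away h)).comp
        (algebraMap R (Localization.Away g))) = algebraMap R (Localization.Away (g * a)) := by
  have hgu : IsUnit (algebraMap R (Localization.Away (g * a)) g) :=
    isUnit_algebraMap_away_of_dvd (Dvd.intro a rfl)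
  set φ : Localization.Away g →+* Localization.Away (g * a) := IsLocalization.Away.lift g hgu
  have hφ : ∀ r : R, φ (algebraMap R (Localization.Away g) r)
      = algebraMap R (Localization.Away (g * a)) r := fun r =>
    IsLocalization.Away.lift_eq g hgu r
  have hau : IsUnit (algebraMap R (Localization.Away (g * a)) a) :=
    isUnit_algebraMap_away_of_dvd (Dvd.intro_left g rfl)
  have hsu : IsUnit (algebraMap R (Localization.Away (g * a)) (s : R)) := by
    obtain ⟨t, ht⟩ := s.2
    have ht' : g ^ t = (s : R) := ht
    have : IsUnit (algebraMap R (Localization.Away (g * a)) g ^ t) := hgu.pow t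
    rw [← map_pow, ht'] at this; exact this
  have hhu : IsUnit (φ h) := by
    have : φ h * algebraMap R (Localization.Away (g * a)) (s : R)
        = algebraMap R (Localization.Away (g * a)) a := by
      rw [← hφ (s : R), ← _root_.map_mul, hs, hφ]
    exact isUnit_of_mul_isUnit_left (this ▸ hau)
  refine ⟨IsLocalization.Away.lift h hhu, ?_⟩
  ext r
  simp only [RingHom.coe_comp, Function.comp_apply]
  rw [IsLocalization.Away.lift_eq h hhu, hφ]

theorem LD.glue {R : Type*} [CommRing R] {n m : ℕ} (M : Matrix (Fin n) (Fin m) R)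
    (k : ℕ) (g : Fin k → R) (hspan : Ideal.span (Set.range g) = ⊤)
    (h : ∀ i, LD (Localization.Away (g i)) (M.map (algebraMap R (Localization.Away (g i))))) :
    LD R M := by
  choose p hh hhspan hhdiag using h
  choose x hx using fun i j => IsLocalization.surj (Submonoid.powers (g i))
    (S := Localization.Away (g i)) (hh i j)
  set a : (i : Fin k) → Fin (p i) → R := fun i j => (x i j).1 with ha
  set ι := (i : Fin k) × Fin (p i)
  set G : ι → R := fun q => g q.1 * a q.1 q.2 with hG
  have hGspan : Ideal.span (Set.range G) = ⊤ := by
    by_contra hne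
    obtain ⟨𝔪, h𝔪max, h𝔪⟩ := Ideal.exists_le_maximal _ hne
    -- some g i is not in 𝔪
    have hgi : ∃ i, g i ∉ 𝔪 := by
      by_contra hall
      push_neg at hall
      have : Ideal.span (Set.range g) ≤ 𝔪 := Ideal.span_le.mpr (by
        rintro _ ⟨i, rfl⟩; exact hall i)
      rw [hspan] at this
      exact h𝔪max.ne_top (top_le_iff.mp this)
    obtain ⟨i, hgi⟩ := hgi
    set I : Ideal R := Ideal.span (Set.range (a i)) with hI
    -- 1 is in the map of I in the localization
    have h1 : (1 : Localization.Away (g i)) ∈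
        I.map (algebraMap R (Localization.Away (g i))) := by
      have hle : Ideal.span (Set.range (hh i)) ≤
          I.map (algebraMap R (Localization.Away (g i))) := by
        refine Ideal.span_le.mpr ?_
        rintro _ ⟨j, rfl⟩
        have hu : IsUnit (algebraMap R (Localization.Away (g i)) ((x i j).2 : R)) :=
          IsLocalization.map_units _ (x i j).2
        have heq : hh i j = algebraMap R (Localization.Away (g i)) (a i j) * ↑hu.unit⁻¹ := by
          rw [Units.eq_mul_inv_iff_mul_eq, IsUnit.unit_spec]
          exact hx i j
        rw [heq]
        exact Ideal.mul_mem_right _ _ (Ideal.mem_map_of_mem _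
          (Ideal.subset_span ⟨j, rfl⟩))
      rw [hhspan i] at hle
      exact hle Submodule.mem_top
    obtain ⟨⟨y, s⟩, hy⟩ :=
      (IsLocalization.mem_map_algebraMap_iff (Submonoid.powers (g i)) _).mp h1
    rw [one_mul] at hy
    obtain ⟨c, hc⟩ := (IsLocalization.eq_iff_exists (Submonoid.powers (g i)) _).mp hy
    obtain ⟨t, ht⟩ := (c * s).2
    have ht' : g i ^ t = (c : R) * (s : R) := by
      have := ht
      simp only at this
      rw [this, Submonoid.coe_mul]
    have hmemI : g i ^ t ∈ I := by
      rw [ht', hc]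
      exact I.mul_mem_left _ y.2
    have hmemG : g i ^ (t + 1) ∈ Ideal.span (Set.range G) := by
      obtain ⟨r, hr⟩ := (Submodule.mem_span_range_iff_exists_fun R).mp (hI ▸ hmemI)
      rw [pow_succ, ← hr, Finset.sum_mul]
      refine Ideal.sum_mem _ fun j _ => ?_
      have heq : r j • a i j * g i = (r j) • (g i * a i j) := by
        simp only [smul_eq_mul]; ring
      rw [heq]
      exact Ideal.mul_mem_left _ _ (Ideal.subset_span ⟨⟨i, j⟩, rfl⟩)
    exact hgi (h𝔪max.isPrime.mem_of_pow_mem _ (h𝔪 hmemG))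
  -- reindex along an equivalence with `Fin`
  set e := Fintype.equivFin ι with he
  refine ⟨Fintype.card ι, G ∘ e.symm, ?_, ?_⟩
  · rw [Function.Surjective.range_comp e.symm.surjective]
    exact hGspan
  · intro q
    obtain ⟨ψ, hψ⟩ := exists_hom_away_away (g (e.symm q).1) (a (e.symm q).1 (e.symm q).2)
      (hh (e.symm q).1 (e.symm q).2) ((x (e.symm q).1 (e.symm q).2).2)
      (hx (e.symm q).1 (e.symm q).2)
    have hd := hhdiag (e.symm q).1 (e.symm q).2
    rw [Matrix.map_map, ← RingHom.coe_comp] at hd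
    exact diagBLT_map_comp hd hψ
/-- Prüfer-like condition: every f.g. ideal is locally principal. -/
def PrueferLike (R : Type*) [CommRing R] : Prop :=
  ∀ a : Ideal R, a.FG → ∃ (k : ℕ) (f : Fin k → R), Ideal.span (Set.range f) = ⊤ ∧
    ∀ i, (a.map (algebraMap R (Localization.Away (f i)))).IsPrincipal

set_option maxHeartbeats 1000000 in
theorem PrueferLike.away {R : Type*} [CommRing R] (hP : PrueferLike R) (u : R) :
    PrueferLike (Localization.Away u) := by
  intro b hb
  obtain ⟨p, vb, hv⟩ := Submodule.fg_iff_exists_fin_generating_family.mp hb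
  choose x hx using fun j => IsLocalization.surj (Submonoid.powers u)
    (S := Localization.Away u) (vb j)
  set a : Ideal R := Ideal.span (Set.range fun j => (x j).1) with hadef
  have ha : a.FG := Submodule.fg_span (Set.finite_range _)
  obtain ⟨k, f, hfspan, hfpr⟩ := hP a ha
  refine ⟨k, fun i => algebraMap R (Localization.Away u) (f i), ?_, ?_⟩
  · obtain ⟨c, hc⟩ := (Submodule.mem_span_range_iff_exists_fun R).mp
      (hfspan ▸ Submodule.mem_top (x := (1 : R)))
    rw [Ideal.eq_top_iff_one]
    refine (Submodule.mem_span_range_iff_exists_fun _).mpr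
      ⟨fun i => algebraMap R (Localization.Away u) (c i), ?_⟩
    have := congrArg (algebraMap R (Localization.Away u)) hc
    simpa [smul_eq_mul] using this
  · intro i
    have hfu : IsUnit (((algebraMap (Localization.Away u) (Localization.Away (algebraMap R (Localization.Away u) (f i)))).comp (algebraMap R (Localization.Away u))) (f i)) :=
      IsLocalization.map_units (Localization.Away (algebraMap R (Localization.Away u) (f i))) (⟨algebraMap R (Localization.Away u) (f i), Submonoid.mem_powers _⟩ :
        Submonoid.powers (algebraMap R (Localization.Away u) (f i)))
    set χ : Localization.Away (f i) →+* (Localization.Away (algebraMap R (Localization.Away u) (f i))) := IsLocalization.Away.lift (f i) hfu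
    have hχ : χ.comp (algebraMap R (Localization.Away (f i)))
        = (algebraMap (Localization.Away u) (Localization.Away (algebraMap R (Localization.Away u) (f i)))).comp (algebraMap R (Localization.Away u)) :=
      IsLocalization.Away.lift_comp (f i) hfu
    -- the ideal a maps onto b in S
    have hab : a.map (algebraMap R (Localization.Away u)) = b := by
      rw [hadef, Ideal.map_span, ← Set.range_comp]
      apply le_antisymm
      · rw [Ideal.span_le]
        rintro _ ⟨j, rfl⟩
        rw [← hv]
        simp only [Function.comp_apply]
        rw [← hx j]
        exact Ideal.mul_mem_right _ _ (Ideal.subset_span ⟨j, rfl⟩)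
      · rw [← hv, Ideal.submodule_span_eq, Ideal.span_le]
        rintro _ ⟨j, rfl⟩
        have hsu : IsUnit (algebraMap R (Localization.Away u) ((x j).2 : R)) :=
          IsLocalization.map_units _ (x j).2
        have : vb j = algebraMap R (Localization.Away u) ((x j).1) * ↑hsu.unit⁻¹ := by
          rw [Units.eq_mul_inv_iff_mul_eq, IsUnit.unit_spec]
          exact hx j
        rw [this]
        exact Ideal.mul_mem_right _ _ (Ideal.subset_span ⟨j, rfl⟩)
    have key : b.map (algebraMap (Localization.Away u) (Localization.Away (algebraMap R (Localization.Away u) (f i))))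
        = Ideal.map χ (a.map (algebraMap R (Localization.Away (f i)))) := by
      rw [Ideal.map_map, hχ, ← Ideal.map_map, hab]
    obtain ⟨α, hα⟩ := hfpr i
    refine ⟨⟨χ α, ?_⟩⟩
    rw [key, hα, Ideal.submodule_span_eq, Ideal.map_span, Set.image_singleton,
      Ideal.submodule_span_eq]
section MatrixTools

variable {R : Type*} [CommRing R] {n m : ℕ}

/-- Permutation matrix. -/
def permM (σ : Equiv.Perm (Fin n)) : Matrix (Fin n) (Fin n) R :=
  Matrix.of fun i j => if σ i = j then 1 else 0

theorem permM_mul_permM (σ ρ : Equiv.Perm (Fin n)) :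
    (permM (R := R) σ) * permM ρ = permM (σ.trans ρ) := by
  ext i j
  rw [Matrix.mul_apply, Finset.sum_eq_single (σ i)]
  · simp [permM]; congr
  · intro k _ hk
    simp [permM, Ne.symm hk]
  · simp

theorem permM_refl : permM (R := R) (Equiv.refl (Fin n)) = 1 := by
  ext i j
  simp [permM, Matrix.one_apply]; congr

/-- Permutation matrix as a unit. -/
def permU (σ : Equiv.Perm (Fin n)) : (Matrix (Fin n) (Fin n) R)ˣ where
  val := permM σ
  inv := permM σ.symm
  val_inv := by rw [permM_mul_permM, Equiv.self_trans_symm, permM_refl]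
  inv_val := by rw [permM_mul_permM, Equiv.symm_trans_self, permM_refl]

theorem permM_mul_apply (σ : Equiv.Perm (Fin n)) (M : Matrix (Fin n) (Fin m) R)
    (i : Fin n) (j : Fin m) : (permM (R := R) σ * M) i j = M (σ i) j := by
  rw [Matrix.mul_apply, Finset.sum_eq_single (σ i)]
  · simp [permM]
  · intro k _ hk
    simp [permM, Ne.symm hk]
  · simp

theorem mul_permM_apply (ρ : Equiv.Perm (Fin m)) (M : Matrix (Fin n) (Fin m) R)
    (i : Fin n) (j : Fin m) : (M * permM (R := R) ρ) i j = M i (ρ.symm j) := by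
  rw [Matrix.mul_apply, Finset.sum_eq_single (ρ.symm j)]
  · simp [permM]
  · intro k _ hk
    have : ρ k ≠ j := fun h => hk (by simp [← h])
    simp [permM, this]
  · simp

/-- Lower shear matrix with first column `q` below the diagonal. -/
def shearL (q : Fin (n + 1) → R) : Matrix (Fin (n + 1)) (Fin (n + 1)) R :=
  Matrix.of fun s t => if t = 0 then (if s = 0 then 0 else q s) else 0

theorem shearL_mul_shearL (q : Fin (n + 1) → R) :
    shearL q * shearL q = 0 := by
  ext s t
  rw [Matrix.mul_apply, Finset.sum_eq_single 0]
  · simp [shearL]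
  · intro k _ hk
    simp [shearL, hk]
  · simp

/-- Row-clearing unit `1 - shearL q`. -/
def shearLU (q : Fin (n + 1) → R) : (Matrix (Fin (n + 1)) (Fin (n + 1)) R)ˣ where
  val := 1 - shearL q
  inv := 1 + shearL q
  val_inv := by
    have h : (1 - shearL q) * (1 + shearL q) = 1 - shearL q * shearL q := by noncomm_ring
    rw [h, shearL_mul_shearL, sub_zero]
  inv_val := by
    have h : (1 + shearL q) * (1 - shearL q) = 1 - shearL q * shearL q := by noncomm_ring
    rw [h, shearL_mul_shearL, sub_zero]

/-- Right shear matrix with first row `p` off the diagonal. -/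
def shearR (p : Fin (m + 1) → R) : Matrix (Fin (m + 1)) (Fin (m + 1)) R :=
  Matrix.of fun s t => if s = 0 then (if t = 0 then 0 else p t) else 0

theorem shearR_mul_shearR (p : Fin (m + 1) → R) :
    shearR p * shearR p = 0 := by
  ext s t
  rw [Matrix.mul_apply, Finset.sum_eq_single 0]
  · simp [shearR]
  · intro k _ hk
    simp [shearR, hk]
  · simp

def shearRU (p : Fin (m + 1) → R) : (Matrix (Fin (m + 1)) (Fin (m + 1)) R)ˣ where
  val := 1 - shearR p
  inv := 1 + shearR p
  val_inv := by
    have h : (1 - shearR p) * (1 + shearR p) = 1 - shearR p * shearR p := by noncomm_ring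
    rw [h, shearR_mul_shearR, sub_zero]
  inv_val := by
    have h : (1 + shearR p) * (1 - shearR p) = 1 - shearR p * shearR p := by noncomm_ring
    rw [h, shearR_mul_shearR, sub_zero]

end MatrixTools
section Expand

variable {R : Type*} [CommRing R] {n m : ℕ}

/-- Extend a matrix by a `1` in the new top-left corner. -/
def expand (P : Matrix (Fin n) (Fin n) R) : Matrix (Fin (n + 1)) (Fin (n + 1)) R :=
  Matrix.of fun i j =>
    Fin.cases (Fin.cases 1 (fun _ => 0) j) (fun i' => Fin.cases 0 (fun j' => P i' j') j) i

@[simp] theorem expand_zz (P : Matrix (Fin n) (Fin n) R) : expand P 0 0 = 1 := rfl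
@[simp] theorem expand_zs (P : Matrix (Fin n) (Fin n) R) (j : Fin n) :
    expand P 0 j.succ = 0 := by simp [expand]
@[simp] theorem expand_sz (P : Matrix (Fin n) (Fin n) R) (i : Fin n) :
    expand P i.succ 0 = 0 := by simp [expand]
@[simp] theorem expand_ss (P : Matrix (Fin n) (Fin n) R) (i j : Fin n) :
    expand P i.succ j.succ = P i j := by simp [expand]

theorem expand_mul (P Q : Matrix (Fin n) (Fin n) R) :
    expand P * expand Q = expand (P * Q) := by
  ext i j
  rw [Matrix.mul_apply]
  induction i using Fin.cases <;> induction j using Fin.cases <;>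
    simp [Fin.sum_univ_succ, Matrix.mul_apply]

theorem expand_one : expand (1 : Matrix (Fin n) (Fin n) R) = 1 := by
  ext i j
  induction i using Fin.cases <;> induction j using Fin.cases <;>
    simp [Matrix.one_apply, Fin.succ_ne_zero, (Fin.succ_ne_zero _).symm, Fin.succ_inj]

/-- Extend a unit matrix by `1` in the top-left corner. -/
def expandU (P : (Matrix (Fin n) (Fin n) R)ˣ) : (Matrix (Fin (n + 1)) (Fin (n + 1)) R)ˣ where
  val := expand P.val
  inv := expand P.inv
  val_inv := by rw [expand_mul, P.val_inv, expand_one]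
  inv_val := by rw [expand_mul, P.inv_val, expand_one]

end Expand
theorem offdiag_expand {S : Type*} [CommRing S] {n m : ℕ}
    (X : Matrix (Fin (n + 1)) (Fin (m + 1)) S)
    (hc : ∀ s : Fin n, X s.succ 0 = 0) (hr : ∀ t : Fin m, X 0 t.succ = 0)
    (P : Matrix (Fin n) (Fin n) S) (Q : Matrix (Fin m) (Fin m) S)
    (h : ∀ (s : Fin n) (t : Fin m), (s : ℕ) ≠ (t : ℕ) →
      (P * X.submatrix Fin.succ Fin.succ * Q) s t = 0) :
    ∀ (rr : Fin (n + 1)) (cc : Fin (m + 1)), (rr : ℕ) ≠ (cc : ℕ) →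
      (expand P * X * expand Q) rr cc = 0 := by
  intro rr cc hne
  induction rr using Fin.cases with
  | zero =>
    induction cc using Fin.cases with
    | zero => exact absurd rfl hne
    | succ t =>
      simp [Matrix.mul_apply, Fin.sum_univ_succ, hr, Finset.mul_sum]
  | succ s =>
    induction cc using Fin.cases with
    | zero =>
      simp [Matrix.mul_apply, Fin.sum_univ_succ, hc, Finset.mul_sum]
    | succ t =>
      have hst : (s : ℕ) ≠ (t : ℕ) := by
        simpa [Fin.val_succ] using hne
      have := h s t hst
      simp only [Matrix.mul_apply, Matrix.submatrix_apply] at this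
      rw [← this]
      simp [Matrix.mul_apply, Fin.sum_univ_succ, Finset.sum_mul, Finset.mul_sum,
        mul_assoc, mul_comm, mul_left_comm]
set_option maxHeartbeats 1000000 in
theorem pivot_LD {T : Type*} [CommRing T] {n m : ℕ}
    (E : Matrix (Fin (n + 1)) (Fin (m + 1)) T) (r : Fin (n + 1)) (c : Fin (m + 1))
    (hd : ∀ s t, ∃ w, E s t = E r c * w)
    (IH : ∀ E' : Matrix (Fin n) (Fin m) T, LD T E') :
    LD T E := by
  set σ : Equiv.Perm (Fin (n + 1)) := Equiv.swap r 0 with hσ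
  set ρ : Equiv.Perm (Fin (m + 1)) := Equiv.swap c 0 with hρ
  set M₀ : Matrix (Fin (n + 1)) (Fin (m + 1)) T := permM (R := T) σ * E * permM (R := T) ρ with hM₀
  have hM0 : ∀ i j, M₀ i j = E (σ i) (ρ.symm j) := by
    intro i j
    rw [hM₀, mul_permM_apply, permM_mul_apply]
  have hdvd : ∀ i j, ∃ w, M₀ i j = M₀ 0 0 * w := by
    intro i j
    rw [hM0, hM0]
    have h1 : σ 0 = r := Equiv.swap_apply_right r 0
    have h2 : ρ.symm 0 = c := by rw [hρ, Equiv.symm_swap]; exact Equiv.swap_apply_right c 0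
    rw [h1, h2]; exact hd _ _
  choose q hq using fun s => hdvd s 0
  choose pr hpr using fun t => hdvd 0 t
  set Amat : Matrix (Fin (n + 1)) (Fin (m + 1)) T := (1 - shearL q) * M₀ with hAmat
  set M₂ : Matrix (Fin (n + 1)) (Fin (m + 1)) T := Amat * (1 - shearR pr) with hM₂
  have hA : ∀ i j, Amat i j = M₀ i j - (if i = 0 then 0 else q i) * M₀ 0 j := by
    intro i j
    rw [hAmat, Matrix.sub_mul, Matrix.sub_apply, Matrix.one_mul]
    congr 1
    rw [Matrix.mul_apply, Finset.sum_eq_single 0]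
    · simp [shearL]
    · intro k _ hk; simp [shearL, hk]
    · simp
  have hM₂e : ∀ i j, M₂ i j = Amat i j - Amat i 0 * (if j = 0 then 0 else pr j) := by
    intro i j
    rw [hM₂, Matrix.mul_sub, Matrix.sub_apply, Matrix.mul_one]
    congr 1
    rw [Matrix.mul_apply, Finset.sum_eq_single 0]
    · simp [shearR]
    · intro k _ hk; simp [shearR, hk]
    · simp
  have hM2c : ∀ s : Fin n, M₂ s.succ 0 = 0 := by
    intro s
    rw [hM₂e, hA]
    simp [Fin.succ_ne_zero, hq s.succ, mul_comm]
  have hM2r : ∀ t : Fin m, M₂ 0 t.succ = 0 := by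
    intro t
    rw [hM₂e, hA, hA]
    simp [Fin.succ_ne_zero, hpr t.succ]
  obtain ⟨k, e, hespan, hediag⟩ := IH (M₂.submatrix Fin.succ Fin.succ)
  refine ⟨k, e, hespan, ?_⟩
  intro i
  set L := Localization.Away (e i) with hL
  set φ := algebraMap T L with hφ
  obtain ⟨PN, QN, hPQ⟩ := hediag i
  set PU : (Matrix (Fin (n + 1)) (Fin (n + 1)) L)ˣ :=
    expandU PN * Units.map φ.mapMatrix.toMonoidHom (shearLU q * permU σ) with hPU
  set QU : (Matrix (Fin (m + 1)) (Fin (m + 1)) L)ˣ :=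
    Units.map φ.mapMatrix.toMonoidHom (permU ρ * shearRU pr) * expandU QN with hQU
  refine ⟨PU, QU, ?_⟩
  intro rr cc hne
  have hPUval : (PU : Matrix (Fin (n + 1)) (Fin (n + 1)) L)
      = expand (PN : Matrix (Fin n) (Fin n) L) * ((1 - shearL q) * permM σ).map φ := by
    rw [hPU]
    simp only [Units.val_mul, Units.coe_map, MonoidHom.coe_coe, RingHom.mapMatrix_apply]
    rfl
  have hQUval : (QU : Matrix (Fin (m + 1)) (Fin (m + 1)) L)
      = (permM ρ * (1 - shearR pr)).map φ * expand (QN : Matrix (Fin m) (Fin m) L) := by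
    rw [hQU]
    simp only [Units.val_mul, Units.coe_map, MonoidHom.coe_coe, RingHom.mapMatrix_apply]
    rfl
  rw [hPUval, hQUval]
  have hT : (1 - shearL q) * permM σ * E * (permM ρ * (1 - shearR pr)) = M₂ := by
    rw [hM₂, hAmat, hM₀]
    simp only [Matrix.mul_assoc]
  have hmid : ((1 - shearL q) * permM σ).map φ * E.map φ * (permM ρ * (1 - shearR pr)).map φ
      = M₂.map φ := by
    rw [← Matrix.map_mul, ← Matrix.map_mul, hT]
  have hassoc : expand (PN : Matrix (Fin n) (Fin n) L) * ((1 - shearL q) * permM σ).map φ *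
      E.map φ * ((permM ρ * (1 - shearR pr)).map φ * expand (QN : Matrix (Fin m) (Fin m) L))
      = expand (PN : Matrix (Fin n) (Fin n) L) *
        (((1 - shearL q) * permM σ).map φ * E.map φ * (permM ρ * (1 - shearR pr)).map φ) *
        expand (QN : Matrix (Fin m) (Fin m) L) := by
    simp only [Matrix.mul_assoc]
  rw [hassoc, hmid]
  refine offdiag_expand (M₂.map φ) ?_ ?_ _ _ ?_ rr cc hne
  · intro s; simp [Matrix.map_apply, hM2c s]
  · intro t; simp [Matrix.map_apply, hM2r t]
  · intro s t hst
    exact hPQ s t hst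
theorem LD.of_empty_left {R : Type*} [CommRing R] {m : ℕ} (M : Matrix (Fin 0) (Fin m) R) :
    LD R M := LD.of_diagBLT ⟨1, 1, fun r => r.elim0⟩

theorem LD.of_empty_right {R : Type*} [CommRing R] {n : ℕ} (M : Matrix (Fin n) (Fin 0) R) :
    LD R M := LD.of_diagBLT ⟨1, 1, fun _ c => c.elim0⟩

theorem main_LD (N : ℕ) : ∀ {n m : ℕ}, n + m ≤ N → ∀ (R : Type u) [CommRing R],
    PrueferLike R → ∀ M : Matrix (Fin n) (Fin m) R, LD R M := by
  induction N with
  | zero =>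
    intro n m hnm R _ hP M
    have hn : n = 0 := by omega
    subst hn
    exact LD.of_empty_left M
  | succ N ih =>
    intro n m hnm R _ hP M
    match n, m, M with
    | 0, m, M => exact LD.of_empty_left M
    | n + 1, 0, M => exact LD.of_empty_right M
    | n + 1, m + 1, M =>
      set a : Ideal R :=
        Ideal.span (Set.range fun p : Fin (n + 1) × Fin (m + 1) => M p.1 p.2) with hadef
      obtain ⟨k, f, hfspan, hfpr⟩ := hP a (Submodule.fg_span (Set.finite_range _))
      apply LD.glue M k f hfspan
      intro i
      obtain ⟨α, hα⟩ := hfpr i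
      rw [Ideal.submodule_span_eq] at hα
      have hmap : a.map (algebraMap R (Localization.Away (f i)))
          = Ideal.span (Set.range fun p : Fin (n + 1) × Fin (m + 1) =>
              (M.map (algebraMap R (Localization.Away (f i)))) p.1 p.2) := by
        rw [hadef, Ideal.map_span, ← Set.range_comp]
        rfl
      have hent : ∀ p : Fin (n + 1) × Fin (m + 1),
          ∃ w, (M.map (algebraMap R (Localization.Away (f i)))) p.1 p.2 = α * w := by
        intro p
        have hmem : (M.map (algebraMap R (Localization.Away (f i)))) p.1 p.2
            ∈ a.map (algebraMap R (Localization.Away (f i))) := by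
          rw [hmap]
          exact Ideal.subset_span ⟨p, rfl⟩
        rw [hα] at hmem
        obtain ⟨w, hw⟩ := Ideal.mem_span_singleton.mp hmem
        exact ⟨w, hw⟩
      choose qq hqq using hent
      have hαmem : α ∈ Ideal.span (Set.range fun p : Fin (n + 1) × Fin (m + 1) =>
          (M.map (algebraMap R (Localization.Away (f i)))) p.1 p.2) := by
        rw [← hmap, hα]
        exact Ideal.subset_span rfl
      obtain ⟨cf, hcf⟩ := (Submodule.mem_span_range_iff_exists_fun _).mp hαmem
      set u : Localization.Away (f i) := ∑ p, cf p * qq p with hu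
      have hαu : α * u = α := by
        rw [hu, Finset.mul_sum]
        conv_rhs => rw [← hcf]
        refine Finset.sum_congr rfl fun p _ => ?_
        rw [hqq p, smul_eq_mul]
        ring
      -- family of further localization elements
      set v : Option (Fin (n + 1) × Fin (m + 1)) → Localization.Away (f i) :=
        fun o => o.elim (1 - u) (fun p => cf p * qq p) with hv
      set eqv := Fintype.equivFin (Option (Fin (n + 1) × Fin (m + 1))) with heqv
      apply LD.glue _ _ (v ∘ eqv.symm)
      · -- spanning
        rw [Function.Surjective.range_comp eqv.symm.surjective]
        rw [Ideal.eq_top_iff_one]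
        have h1 : (1 : Localization.Away (f i)) = v none + u := by
          simp [hv]
        rw [h1]
        refine Ideal.add_mem _ (Ideal.subset_span ⟨none, rfl⟩) ?_
        rw [hu]
        exact Ideal.sum_mem _ fun p _ => Ideal.subset_span ⟨some p, rfl⟩
      · intro j
        have hgen : ∀ o : Option (Fin (n + 1) × Fin (m + 1)),
            LD (Localization.Away (v o))
              ((M.map (algebraMap R (Localization.Away (f i)))).map
                (algebraMap (Localization.Away (f i)) (Localization.Away (v o)))) := by
          intro o
          rcases o with _ | p₀
          · -- the matrix becomes zero
            have hvn : v none = 1 - u := rfl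
            have hαz : algebraMap (Localization.Away (f i))
                (Localization.Away (v none)) α = 0 := by
              have hz : α * v none = 0 := by
                rw [hvn, mul_sub, mul_one, hαu, sub_self]
              have hunit : IsUnit (algebraMap (Localization.Away (f i))
                  (Localization.Away (v none)) (v none)) :=
                IsLocalization.map_units _ (⟨_, Submonoid.mem_powers _⟩ :
                  Submonoid.powers (v none))
              have h2 := congrArg (algebraMap (Localization.Away (f i))
                  (Localization.Away (v none))) hz
              rw [_root_.map_mul, map_zero] at h2
              exact hunit.mul_left_eq_zero.mp h2
            apply LD.of_diagBLT
            refine ⟨1, 1, fun r c _ => ?_⟩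
            simp only [Units.val_one, Matrix.one_mul, Matrix.mul_one]
            have h3 : ((M.map (algebraMap R (Localization.Away (f i)))).map
                (algebraMap (Localization.Away (f i)) (Localization.Away (v none)))) r c
                = algebraMap (Localization.Away (f i)) (Localization.Away (v none))
                  (α * qq (r, c)) :=
              congrArg (algebraMap (Localization.Away (f i)) (Localization.Away (v none)))
                (hqq (r, c))
            rw [h3, _root_.map_mul, hαz, zero_mul]
          · -- pivot at p₀
            have hvs : v (some p₀) = cf p₀ * qq p₀ := rfl
            have hqunit : IsUnit (algebraMap (Localization.Away (f i))
                (Localization.Away (v (some p₀))) (qq p₀)) := by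
              have hunit : IsUnit (algebraMap (Localization.Away (f i))
                  (Localization.Away (v (some p₀))) (v (some p₀))) :=
                IsLocalization.map_units _ (⟨_, Submonoid.mem_powers _⟩ :
                  Submonoid.powers (v (some p₀)))
              rw [show algebraMap (Localization.Away (f i))
                  (Localization.Away (v (some p₀))) (v (some p₀))
                  = algebraMap (Localization.Away (f i))
                    (Localization.Away (v (some p₀))) (cf p₀) *
                    algebraMap (Localization.Away (f i))
                      (Localization.Away (v (some p₀))) (qq p₀) by
                rw [← _root_.map_mul]; exact congrArg _ hvs] at hunit
              exact isUnit_of_mul_isUnit_right hunit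
            obtain ⟨wu, hwu⟩ := hqunit
            apply pivot_LD _ p₀.1 p₀.2
            · -- divisibility from the pivot entry
              intro s t
              refine ⟨↑wu⁻¹ * algebraMap _ _ (qq (s, t)), ?_⟩
              have h1 : ((M.map (algebraMap R (Localization.Away (f i)))).map
                  (algebraMap (Localization.Away (f i)) (Localization.Away (v (some p₀))))) s t
                  = algebraMap (Localization.Away (f i)) (Localization.Away (v (some p₀)))
                    (α * qq (s, t)) :=
                congrArg (algebraMap (Localization.Away (f i))
                  (Localization.Away (v (some p₀)))) (hqq (s, t))
              have h2 : ((M.map (algebraMap R (Localization.Away (f i)))).map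
                  (algebraMap (Localization.Away (f i)) (Localization.Away (v (some p₀))))) p₀.1 p₀.2
                  = algebraMap (Localization.Away (f i)) (Localization.Away (v (some p₀)))
                    (α * qq p₀) :=
                congrArg (algebraMap (Localization.Away (f i))
                  (Localization.Away (v (some p₀)))) (hqq p₀)
              rw [h1, h2, _root_.map_mul, _root_.map_mul]
              have h4 : algebraMap (Localization.Away (f i))
                  (Localization.Away (v (some p₀))) (qq p₀) * ↑wu⁻¹ = 1 := by
                rw [← hwu]
                exact Units.mul_inv _
              calc algebraMap _ _ α * algebraMap _ _ (qq (s, t))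
                  = algebraMap _ _ α * ((algebraMap (Localization.Away (f i))
                      (Localization.Away (v (some p₀))) (qq p₀) *
                      ↑wu⁻¹) * algebraMap _ _ (qq (s, t))) := by
                    rw [h4, one_mul]
                _ = algebraMap _ _ α * algebraMap _ _ (qq p₀) *
                      (↑wu⁻¹ * algebraMap _ _ (qq (s, t))) := by ring
            · -- induction hypothesis
              intro E'
              exact ih (by omega) _ ((hP.away (f i)).away (v (some p₀))) E'
        exact hgen (eqv.symm j)
/-- Over a Prüfer domain (an integral domain in which every finitely generated ideal is
locally principal), every matrix can locally be brought into diagonal form by invertible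
row and column transformations. -/
theorem matrix_locally_diagonal_form_of_pruefer {A : Type*} [CommRing A] [IsDomain A]
    (hpruefer : ∀ a : Ideal A, a.FG →
      ∃ (p : ℕ) (f : Fin p → A), ∑ i, f i = 1 ∧
        ∀ i, (a.map (algebraMap A (Localization.Away (f i)))).IsPrincipal)
    {n m : ℕ} (M : Matrix (Fin n) (Fin m) A) :
    ∃ (k : ℕ) (g : Fin k → A), ∑ i, g i = 1 ∧
      ∀ i : Fin k,
        ∃ (P : (Matrix (Fin n) (Fin n) (Localization.Away (g i)))ˣ)
          (Q : (Matrix (Fin m) (Fin m) (Localization.Away (g i)))ˣ),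
          ∀ (r : Fin n) (c : Fin m), (r : ℕ) ≠ (c : ℕ) →
            ((P : Matrix (Fin n) (Fin n) (Localization.Away (g i))) *
              M.map (algebraMap A (Localization.Away (g i))) *
              (Q : Matrix (Fin m) (Fin m) (Localization.Away (g i)))) r c = 0 := by
  have hP : PrueferLike A := by
    intro a ha
    obtain ⟨p, f, hsum, hpr⟩ := hpruefer a ha
    refine ⟨p, f, ?_, hpr⟩
    rw [Ideal.eq_top_iff_one, ← hsum]
    exact Ideal.sum_mem _ fun i _ => Ideal.subset_span ⟨i, rfl⟩
  obtain ⟨k, g, hspan, hdiag⟩ := main_LD (n + m) le_rfl A hP M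
  obtain ⟨cf, hcf⟩ := (Submodule.mem_span_range_iff_exists_fun A).mp
    (hspan ▸ Submodule.mem_top (x := (1 : A)))
  refine ⟨k, fun i => cf i * g i, by simpa [smul_eq_mul] using hcf, ?_⟩
  intro i
  have hgu : IsUnit (algebraMap A (Localization.Away (cf i * g i)) (g i)) :=
    isUnit_algebraMap_away_of_dvd (Dvd.intro_left (cf i) rfl)
  have hcomp : (IsLocalization.Away.lift (S := Localization.Away (g i)) (g i) hgu).comp
      (algebraMap A (Localization.Away (g i)))
      = algebraMap A (Localization.Away (cf i * g i)) :=
    IsLocalization.Away.lift_comp (g i) hgu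
  exact diagBLT_map_comp (hdiag i) hcomp
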